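/- Let α and β be real numbers with 0 < α < 1 and β > −1, let a be a real number, and let x > a. Then the function y ↦ (1/Γ(1−α)) ∫_a^y (y − z)^{−α} (z − a)^β dz is differentiable at x with derivative (Γ(β+1)/Γ(β+1−α)) · (x − a)^{β−α}. (This is the formula for the left-sided Riemann–Liouville fractional derivative of order α of the power function (x−a)^β.) -/

import Mathlib

open Real MeasureTheory intervalIntegral

lemma beta_eval (α β : ℝ) (hα2 : α < 1) (hβ : -1 < β) :
    ∫ t in (0:ℝ)..1, (1 - t) ^ (-α) * t ^ β =
      Real.Gamma (β + 1) * Real.Gamma (1 - α) / Real.Gamma (β + 2 - α) := by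
  have hs : 0 < (((β + 1 : ℝ)) : ℂ).re := by simpa using by linarith
  have ht : 0 < (((1 - α : ℝ)) : ℂ).re := by simpa using by linarith
  have key := Complex.Gamma_mul_Gamma_eq_betaIntegral hs ht
  have hB : Complex.betaIntegral ((β + 1 : ℝ) : ℂ) ((1 - α : ℝ) : ℂ)
      = ((∫ t in (0:ℝ)..1, (1 - t) ^ (-α) * t ^ β : ℝ) : ℂ) := by
    rw [Complex.betaIntegral, ← intervalIntegral.integral_ofReal]
    refine intervalIntegral.integral_congr fun t ht' => ?_
    rw [Set.uIcc_of_le (by norm_num : (0:ℝ) ≤ 1)] at ht'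
    rw [Complex.ofReal_mul, Complex.ofReal_cpow (by linarith [ht'.2] : (0:ℝ) ≤ 1 - t),
      Complex.ofReal_cpow ht'.1]
    push_cast
    rw [show ((β:ℂ) + 1 - 1) = (β:ℂ) by ring, show (1 - (α:ℂ) - 1) = -(α:ℂ) by ring]
    ring
  rw [hB] at key
  have hsum : ((β + 1 : ℝ) : ℂ) + ((1 - α : ℝ) : ℂ) = ((β + 2 - α : ℝ) : ℂ) := by push_cast; ring
  rw [hsum, Complex.Gamma_ofReal, Complex.Gamma_ofReal, Complex.Gamma_ofReal] at key
  have hG : Real.Gamma (β + 2 - α) ≠ 0 := (Real.Gamma_pos_of_pos (by linarith)).ne'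
  have : Real.Gamma (β + 1) * Real.Gamma (1 - α)
      = Real.Gamma (β + 2 - α) * ∫ t in (0:ℝ)..1, (1 - t) ^ (-α) * t ^ β := by
    exact_mod_cast key
  field_simp
  linarith [this]

lemma integral_eval (α β a y : ℝ) (hay : a < y) :
    (∫ z in a..y, (y - z) ^ (-α) * (z - a) ^ β)
      = (y - a) ^ (β + 1 - α) * ∫ t in (0:ℝ)..1, (1 - t) ^ (-α) * t ^ β := by
  have h0 : 0 < y - a := by linarith
  have hsub := intervalIntegral.smul_integral_comp_mul_add
    (f := fun z => (y - z) ^ (-α) * (z - a) ^ β) (a := (0:ℝ)) (b := 1) (y - a) a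
  simp only [mul_zero, zero_add, mul_one, sub_add_cancel] at hsub
  rw [← hsub]
  have : ∀ t ∈ Set.uIcc (0:ℝ) 1,
      (y - ((y - a) * t + a)) ^ (-α) * ((y - a) * t + a - a) ^ β
        = ((y - a) ^ (-α) * (y - a) ^ β) * ((1 - t) ^ (-α) * t ^ β) := by
    intro t ht'
    rw [Set.uIcc_of_le (by norm_num : (0:ℝ) ≤ 1)] at ht'
    have h1 : y - ((y - a) * t + a) = (y - a) * (1 - t) := by ring
    have h2 : (y - a) * t + a - a = (y - a) * t := by ring
    rw [h1, h2, Real.mul_rpow h0.le (by linarith [ht'.2]), Real.mul_rpow h0.le ht'.1]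
    ring
  rw [intervalIntegral.integral_congr this, intervalIntegral.integral_const_mul, smul_eq_mul]
  rw [show (y - a) ^ (β + 1 - α) = (y - a) ^ (1:ℝ) * ((y - a) ^ (-α) * (y - a) ^ β) by
    rw [← Real.rpow_add h0, ← Real.rpow_add h0]; ring_nf, Real.rpow_one]
  ring

theorem rl_derivative_power_rule (α β : ℝ) (hα1 : 0 < α) (hα2 : α < 1)
    (hβ : -1 < β) (a x : ℝ) (hax : a < x) :
    HasDerivAt
      (fun y : ℝ => (1 / Real.Gamma (1 - α)) * ∫ z in a..y, (y - z) ^ (-α) * (z - a) ^ β)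
      ((Real.Gamma (β + 1) / Real.Gamma (β + 1 - α)) * (x - a) ^ (β - α)) x := by
  set B : ℝ := ∫ t in (0:ℝ)..1, (1 - t) ^ (-α) * t ^ β with hBdef
  have hx0 : x - a ≠ 0 := sub_ne_zero.mpr hax.ne'
  have hpow : HasDerivAt (fun y : ℝ => (y - a) ^ (β + 1 - α))
      (1 * (β + 1 - α) * (x - a) ^ (β + 1 - α - 1)) x :=
    ((hasDerivAt_id x).sub_const a).rpow_const (Or.inl hx0)
  have hg : HasDerivAt (fun y : ℝ => (1 / Real.Gamma (1 - α)) * (B * (y - a) ^ (β + 1 - α)))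
      ((1 / Real.Gamma (1 - α)) * (B * (1 * (β + 1 - α) * (x - a) ^ (β + 1 - α - 1)))) x :=
    (hpow.const_mul B).const_mul _
  have heq : (fun y : ℝ => (1 / Real.Gamma (1 - α)) * ∫ z in a..y, (y - z) ^ (-α) * (z - a) ^ β)
      =ᶠ[nhds x] (fun y : ℝ => (1 / Real.Gamma (1 - α)) * (B * (y - a) ^ (β + 1 - α))) := by
    filter_upwards [Ioi_mem_nhds hax] with y hy
    rw [integral_eval α β a y hy, ← hBdef]
    ring
  have := hg.congr_of_eventuallyEq heq
  convert this using 1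
  case e'_4 => rfl
  case e'_5 => rfl
  rw [hBdef, beta_eval α β hα2 hβ]
  have hp1 : β + 1 - α - 1 = β - α := by ring
  rw [hp1]
  by_cases h0 : β + 1 - α = 0
  · rw [h0, Real.Gamma_zero]
    simp
  · have hrec : Real.Gamma (β + 2 - α) = (β + 1 - α) * Real.Gamma (β + 1 - α) := by
      rw [show β + 2 - α = (β + 1 - α) + 1 by ring, Real.Gamma_add_one h0]
    have hG1 : Real.Gamma (1 - α) ≠ 0 := (Real.Gamma_pos_of_pos (by linarith)).ne'
    have hG2 : Real.Gamma (β + 1 - α) ≠ 0 := by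
      apply Real.Gamma_ne_zero
      intro m
      match m with
      | 0 => simpa using h0
      | (n+1) => push_cast; intro hc; nlinarith [Nat.cast_nonneg (α := ℝ) n]
    rw [hrec]
    field_simp
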